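/- Let E be a 3-dimensional real inner product space. Let t, n₁, n₂ ∈ E be unit vectors such that ⟨t, n₁⟩ = 0, ⟨t, n₂⟩ = 0, and ⟨n₁, n₂⟩² < 1 (i.e. n₁ and n₂ are not parallel). Then every vector v ∈ E with ⟨v, t⟩ = 0 satisfies ‖v‖ ≤ (|⟨v, n₁⟩| + |⟨v, n₂⟩|) / √(1 − ⟨n₁, n₂⟩²). -/

import Mathlib

open RealInnerProductSpace

set_option maxHeartbeats 1000000 in
/-- Linear-algebra core of Ilmanen's intersection-curvature lemma. -/
theorem norm_le_of_inner_orthogonal_three_dim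
    {E : Type*} [NormedAddCommGroup E] [InnerProductSpace ℝ E]
    (hdim : Module.finrank ℝ E = 3)
    (t n₁ n₂ : E) (ht : ‖t‖ = 1) (hn₁ : ‖n₁‖ = 1) (hn₂ : ‖n₂‖ = 1)
    (htn₁ : ⟪t, n₁⟫ = 0) (htn₂ : ⟪t, n₂⟫ = 0)
    (hpar : ⟪n₁, n₂⟫ ^ 2 < 1) :
    ∀ v : E, ⟪v, t⟫ = 0 →
      ‖v‖ ≤ (|⟪v, n₁⟫| + |⟪v, n₂⟫|) / Real.sqrt (1 - ⟪n₁, n₂⟫ ^ 2) := by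
  intro v hvt
  haveI : FiniteDimensional ℝ E := FiniteDimensional.of_finrank_eq_succ hdim
  set c : ℝ := ⟪n₁, n₂⟫ with hc
  have hc1 : 0 < 1 - c ^ 2 := by linarith
  set s : ℝ := Real.sqrt (1 - c ^ 2) with hsdef
  have hs : 0 < s := Real.sqrt_pos.mpr hc1
  have hs2 : s ^ 2 = 1 - c ^ 2 := Real.sq_sqrt hc1.le
  set w : E := s⁻¹ • (n₂ - c • n₁) with hw
  have hn₁n₁ : ⟪n₁, n₁⟫ = 1 := by
    rw [real_inner_self_eq_norm_sq, hn₁]; norm_num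
  have hn₂n₂ : ⟪n₂, n₂⟫ = 1 := by
    rw [real_inner_self_eq_norm_sq, hn₂]; norm_num
  have htt : ⟪t, t⟫ = 1 := by
    rw [real_inner_self_eq_norm_sq, ht]; norm_num
  have hn₂n₁ : ⟪n₂, n₁⟫ = c := by rw [real_inner_comm]
  have hn₁w : ⟪n₁, w⟫ = 0 := by
    simp [hw, inner_smul_right, inner_sub_right, hn₁n₁, hc.symm, hn₁]
  have htw : ⟪t, w⟫ = 0 := by
    simp [hw, inner_smul_right, inner_sub_right, htn₁, htn₂]
  have hww : ⟪w, w⟫ = 1 := by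
    rw [hw]
    rw [real_inner_smul_left, real_inner_smul_right]
    rw [inner_sub_left, inner_sub_right, inner_sub_right, real_inner_smul_left,
      real_inner_smul_left, real_inner_smul_right, real_inner_smul_right]
    rw [hn₂n₂, hn₂n₁, hn₁n₁, hc.symm]
    field_simp
    nlinarith [hs2]
  have hnw : ‖w‖ = 1 := by
    have : ‖w‖ ^ 2 = 1 := by rw [← real_inner_self_eq_norm_sq, hww]
    nlinarith [norm_nonneg w]
  -- orthonormal family
  set f : Fin 3 → E := ![t, n₁, w] with hf
  have hon : Orthonormal ℝ f := by
    rw [orthonormal_iff_ite]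
    intro i j
    fin_cases i <;> fin_cases j <;>
      simp [hf, htt, hn₁n₁, hww, htn₁, ht, hn₁, hnw, htw, hn₁w, real_inner_comm t n₁,
        real_inner_comm t w, real_inner_comm n₁ w]
  have hsp : ⊤ ≤ Submodule.span ℝ (Set.range f) :=
    (hon.linearIndependent.span_eq_top_of_card_eq_finrank (by simp [hdim])).ge
  let b : OrthonormalBasis (Fin 3) ℝ E := OrthonormalBasis.mk hon hsp
  have hb : ⇑b = f := OrthonormalBasis.coe_mk hon hsp
  have hvw : ⟪v, w⟫ = s⁻¹ * (⟪v, n₂⟫ - c * ⟪v, n₁⟫) := by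
    simp [hw, inner_smul_right, inner_sub_right]
  set x : ℝ := ⟪v, n₁⟫ with hx
  set y : ℝ := ⟪v, n₂⟫ with hy
  have hparseval : ‖v‖ ^ 2 = x ^ 2 + ⟪v, w⟫ ^ 2 := by
    have h := b.sum_inner_mul_inner v v
    rw [Fin.sum_univ_three] at h
    rw [hb] at h
    simp only [hf] at h
    rw [real_inner_self_eq_norm_sq] at h
    rw [← h]
    simp only [Matrix.cons_val_zero, Matrix.cons_val_one, Matrix.head_cons,
      Matrix.cons_val_two, Matrix.tail_cons]
    have hvt' : ⟪t, v⟫ = 0 := by rw [real_inner_comm]; exact hvt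
    rw [hvt', real_inner_comm n₁ v, real_inner_comm w v, hx]
    rw [real_inner_comm n₁ v]
    ring
  clear_value c s w x y
  have key : ‖v‖ ^ 2 * s ^ 2 ≤ (|x| + |y|) ^ 2 := by
    have hsne : s ≠ 0 := hs.ne'
    have hcabs : |c| ≤ 1 := by nlinarith [sq_abs c, abs_nonneg c]
    have h1 : (s⁻¹ * (y - c * x)) ^ 2 * s ^ 2 = (y - c * x) ^ 2 := by
      rw [mul_pow, mul_right_comm, ← mul_pow, inv_mul_cancel₀ hsne, one_pow, one_mul]
    have h2 : -(c * x * y) ≤ |x| * |y| := by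
      calc -(c * x * y) ≤ |c * x * y| := neg_le_abs _
        _ = |c| * |x| * |y| := by rw [abs_mul, abs_mul]
        _ ≤ 1 * |x| * |y| :=
            mul_le_mul_of_nonneg_right
              (mul_le_mul_of_nonneg_right hcabs (abs_nonneg x)) (abs_nonneg y)
        _ = |x| * |y| := by ring
    rw [hparseval, hvw, add_mul, h1, hs2]
    nlinarith [sq_abs x, sq_abs y, h2]
  rw [le_div_iff₀ hs]
  nlinarith [norm_nonneg v, hs, sq_nonneg (‖v‖ * s - (|x| + |y|)), abs_nonneg x, abs_nonneg y]
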